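/- Let m ≥ 1 and let A be an invertible m×m complex matrix. The determinant of the ℝ-linear endomorphism of the real vector space of m×m complex Hermitian matrices given by X ↦ A X A* equals |det A|^{2m}, where A* is the conjugate transpose and |·| is the complex absolute value. (Complex case β = 2 of Proposition 1(i): the Jacobian of Y = A X A* on Hermitian matrices is |A*A|^{(m-1)+1} = |det A|^{2m}.) -/

import Mathlib

set_option maxHeartbeats 1000000
set_option synthInstance.maxHeartbeats 400000


open Matrix MeasureTheory ComplexOrder TensorProduct
noncomputable section

/-- The real vector space of `m × m` complex Hermitian matrices. -/
def HermMat (m : ℕ) : Submodule ℝ (Matrix (Fin m) (Fin m) ℂ) where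
  carrier := {X | X.IsHermitian}
  add_mem' := fun h1 h2 => h1.add h2
  zero_mem' := Matrix.isHermitian_zero
  smul_mem' := fun c X hX => by
    show (c • X)ᴴ = c • X
    rw [Matrix.conjTranspose_smul, star_trivial]
    exact congrArg (c • ·) hX

lemma mem_hermMat {m : ℕ} {X : Matrix (Fin m) (Fin m) ℂ} (h : X ∈ HermMat m) :
    X.IsHermitian := h

/-- `HermMat m` carries its Borel σ-algebra. -/
instance (m : ℕ) : MeasurableSpace (HermMat m) := borel _
instance (m : ℕ) : BorelSpace (HermMat m) := ⟨rfl⟩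
lemma isHermitian_congr {m : ℕ} (A : Matrix (Fin m) (Fin m) ℂ)
    {X : Matrix (Fin m) (Fin m) ℂ} (hX : X.IsHermitian) : (A * X * Aᴴ).IsHermitian := by
  show (A * X * Aᴴ)ᴴ = A * X * Aᴴ
  rw [Matrix.conjTranspose_mul, Matrix.conjTranspose_mul,
    Matrix.conjTranspose_conjTranspose, hX.eq, Matrix.mul_assoc]

/-- The ℝ-linear endomorphism `X ↦ A X A*` of the space of Hermitian matrices. -/
def hermCongr {m : ℕ} (A : Matrix (Fin m) (Fin m) ℂ) : HermMat m →ₗ[ℝ] HermMat m where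
  toFun X := ⟨A * X.1 * Aᴴ, isHermitian_congr A (mem_hermMat X.2)⟩
  map_add' X Y := by apply Subtype.ext; simp [Matrix.mul_add, Matrix.add_mul]
  map_smul' c X := by apply Subtype.ext; simp [Matrix.mul_smul, Matrix.smul_mul]


section DetHermCongrAux
open TensorProduct

lemma stdBasis_repr' {m : ℕ} (X : Matrix (Fin m) (Fin m) ℂ) (p : Fin m × Fin m) :
    (Matrix.stdBasis ℂ (Fin m) (Fin m)).repr X p = X p.1 p.2 := by
  obtain ⟨i, j⟩ := p
  simp [Matrix.stdBasis, Pi.basis_repr]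

lemma det_mulLeft' {m : ℕ} (A : Matrix (Fin m) (Fin m) ℂ) :
    LinearMap.det (LinearMap.mulLeft ℂ A) = A.det ^ m := by
  classical
  rw [← LinearMap.det_toMatrix (Matrix.stdBasis ℂ (Fin m) (Fin m))]
  have h : LinearMap.toMatrix (Matrix.stdBasis ℂ (Fin m) (Fin m))
      (Matrix.stdBasis ℂ (Fin m) (Fin m)) (LinearMap.mulLeft ℂ A)
      = Matrix.blockDiagonal (fun _ : Fin m => A) := by
    ext ⟨i, j⟩ ⟨k, l⟩
    rw [LinearMap.toMatrix_apply, Matrix.stdBasis_eq_single, stdBasis_repr']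
    simp only [LinearMap.mulLeft_apply, Matrix.mul_apply, Matrix.single,
      Matrix.blockDiagonal_apply, Matrix.of_apply, mul_ite, mul_one, mul_zero,
      Finset.sum_ite_eq]
    by_cases hkl : k = i ∧ l = j <;> by_cases hjl : j = l <;>
      simp_all [Finset.sum_ite_eq', eq_comm]
  rw [h, Matrix.det_blockDiagonal, Finset.prod_const, Finset.card_univ, Fintype.card_fin]

lemma det_mulRight' {m : ℕ} (B : Matrix (Fin m) (Fin m) ℂ) :
    LinearMap.det (LinearMap.mulRight ℂ B) = B.det ^ m := by
  classical
  rw [← LinearMap.det_toMatrix (Matrix.stdBasis ℂ (Fin m) (Fin m))]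
  have h : LinearMap.toMatrix (Matrix.stdBasis ℂ (Fin m) (Fin m))
      (Matrix.stdBasis ℂ (Fin m) (Fin m)) (LinearMap.mulRight ℂ B)
      = (Matrix.blockDiagonal (fun _ : Fin m => Bᵀ)).submatrix
          (Equiv.prodComm (Fin m) (Fin m)) (Equiv.prodComm (Fin m) (Fin m)) := by
    ext ⟨i, j⟩ ⟨k, l⟩
    rw [LinearMap.toMatrix_apply, Matrix.stdBasis_eq_single, stdBasis_repr']
    simp only [LinearMap.mulRight_apply, Matrix.mul_apply, Matrix.single,
      Matrix.blockDiagonal_apply, Matrix.submatrix_apply, Equiv.prodComm_apply,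
      Prod.swap_prod_mk, Matrix.of_apply, ite_mul, one_mul, zero_mul,
      Finset.sum_ite_eq, Matrix.transpose_apply]
    by_cases hik : i = k <;> simp_all [Finset.sum_ite_eq', eq_comm]
  rw [h, Matrix.det_submatrix_equiv_self (Equiv.prodComm _ _),
    Matrix.det_blockDiagonal, Matrix.det_transpose, Finset.prod_const, Finset.card_univ,
    Fintype.card_fin]

/-- real part projection onto Hermitian matrices -/
def reP (m : ℕ) : Matrix (Fin m) (Fin m) ℂ →ₗ[ℝ] HermMat m where
  toFun X := ⟨(2⁻¹ : ℝ) • (X + Xᴴ), by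
    show _ᴴ = _
    rw [Matrix.conjTranspose_smul, star_trivial, Matrix.conjTranspose_add,
      Matrix.conjTranspose_conjTranspose, add_comm]⟩
  map_add' X Y := by
    apply Subtype.ext
    show (2⁻¹:ℝ) • (X + Y + (X + Y)ᴴ) = (2⁻¹:ℝ) • (X + Xᴴ) + (2⁻¹:ℝ) • (Y + Yᴴ)
    rw [Matrix.conjTranspose_add, ← smul_add]
    ring_nf
    module
  map_smul' c X := by
    apply Subtype.ext
    show (2⁻¹:ℝ) • (c • X + (c • X)ᴴ) = c • ((2⁻¹:ℝ) • (X + Xᴴ))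
    rw [Matrix.conjTranspose_smul, star_trivial, ← smul_add, smul_comm]

/-- imaginary part projection onto Hermitian matrices -/
def imP (m : ℕ) : Matrix (Fin m) (Fin m) ℂ →ₗ[ℝ] HermMat m where
  toFun X := ⟨(2⁻¹ : ℝ) • (Complex.I • (Xᴴ - X)), by
    show _ᴴ = _
    rw [Matrix.conjTranspose_smul, star_trivial, Matrix.conjTranspose_smul,
      Matrix.conjTranspose_sub, Matrix.conjTranspose_conjTranspose, Complex.star_def,
      Complex.conj_I, neg_smul, ← smul_neg, neg_sub]⟩
  map_add' X Y := by
    apply Subtype.ext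
    show (2⁻¹:ℝ) • (Complex.I • ((X + Y)ᴴ - (X + Y))) = _
    rw [Matrix.conjTranspose_add]
    show _ = (2⁻¹:ℝ) • (Complex.I • (Xᴴ - X)) + (2⁻¹:ℝ) • (Complex.I • (Yᴴ - Y))
    rw [← smul_add, ← smul_add]
    congr 1
    module
  map_smul' c X := by
    apply Subtype.ext
    show (2⁻¹:ℝ) • (Complex.I • ((c • X)ᴴ - c • X)) = c • ((2⁻¹:ℝ) • (Complex.I • (Xᴴ - X)))
    rw [Matrix.conjTranspose_smul, star_trivial, ← smul_sub]
    rw [smul_comm (Complex.I) c, smul_comm (2⁻¹:ℝ) c]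

def hermToMat (m : ℕ) : ℂ ⊗[ℝ] (HermMat m) →ₗ[ℂ] Matrix (Fin m) (Fin m) ℂ :=
  (HermMat m).subtype.liftBaseChange ℂ

def matToHerm (m : ℕ) : Matrix (Fin m) (Fin m) ℂ →ₗ[ℝ] ℂ ⊗[ℝ] (HermMat m) where
  toFun X := (1 : ℂ) ⊗ₜ reP m X + Complex.I ⊗ₜ imP m X
  map_add' X Y := by
    show (1:ℂ) ⊗ₜ[ℝ] reP m (X + Y) + Complex.I ⊗ₜ[ℝ] imP m (X + Y) = _
    rw [map_add, map_add, tmul_add, tmul_add]; abel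
  map_smul' c X := by
    show (1:ℂ) ⊗ₜ[ℝ] reP m (c • X) + Complex.I ⊗ₜ[ℝ] imP m (c • X) = _
    rw [LinearMap.map_smul, LinearMap.map_smul, tmul_smul, tmul_smul, RingHom.id_apply, smul_add]

lemma hermToMat_matToHerm (m : ℕ) (X : Matrix (Fin m) (Fin m) ℂ) :
    hermToMat m (matToHerm m X) = X := by
  show hermToMat m ((1 : ℂ) ⊗ₜ reP m X + Complex.I ⊗ₜ imP m X) = X
  rw [map_add]
  show (1 : ℂ) • ((reP m X : Matrix (Fin m) (Fin m) ℂ))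
      + Complex.I • ((imP m X : Matrix (Fin m) (Fin m) ℂ)) = X
  show (1 : ℂ) • ((2⁻¹ : ℝ) • (X + Xᴴ)) + Complex.I • ((2⁻¹ : ℝ) • (Complex.I • (Xᴴ - X))) = X
  ext i j
  simp [Matrix.add_apply, Matrix.smul_apply, Complex.real_smul]
  ring_nf
  simp [Complex.I_sq]
  ring

lemma hermToMat_tmul (m : ℕ) (z : ℂ) (X : HermMat m) :
    hermToMat m (z ⊗ₜ[ℝ] X) = z • (X : Matrix (Fin m) (Fin m) ℂ) :=
  LinearMap.liftBaseChange_tmul _ _ _ _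

lemma matToHerm_hermToMat (m : ℕ) (t : ℂ ⊗[ℝ] (HermMat m)) :
    matToHerm m (hermToMat m t) = t := by
  induction t with
  | zero => simp
  | add x y hx hy => rw [map_add, map_add, hx, hy]
  | tmul z X =>
    have h1 : hermToMat m (z ⊗ₜ[ℝ] X) = z • (X : Matrix (Fin m) (Fin m) ℂ) :=
      LinearMap.liftBaseChange_tmul _ _ _ _
    rw [h1]
    have hX : (X : Matrix (Fin m) (Fin m) ℂ)ᴴ = X := X.2
    have hre : reP m (z • (X : Matrix (Fin m) (Fin m) ℂ)) = z.re • X := by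
      apply Subtype.ext
      show (2⁻¹:ℝ) • (z • (X:Matrix (Fin m) (Fin m) ℂ) + (z • (X:Matrix (Fin m) (Fin m) ℂ))ᴴ)
        = z.re • (X:Matrix (Fin m) (Fin m) ℂ)
      rw [Matrix.conjTranspose_smul, hX]
      ext i j
      simp [Matrix.smul_apply, Complex.real_smul, Complex.ext_iff]
      constructor <;> ring
    have him : imP m (z • (X : Matrix (Fin m) (Fin m) ℂ)) = z.im • X := by
      apply Subtype.ext
      show (2⁻¹:ℝ) • (Complex.I • ((z • (X:Matrix (Fin m) (Fin m) ℂ))ᴴ - z • (X:Matrix (Fin m) (Fin m) ℂ)))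
        = z.im • (X:Matrix (Fin m) (Fin m) ℂ)
      rw [Matrix.conjTranspose_smul, hX]
      ext i j
      simp [Matrix.smul_apply, Matrix.sub_apply, Complex.real_smul, Complex.ext_iff]
      constructor <;> ring
    show (1:ℂ) ⊗ₜ[ℝ] reP m (z • (X:Matrix (Fin m) (Fin m) ℂ))
        + Complex.I ⊗ₜ[ℝ] imP m (z • (X:Matrix (Fin m) (Fin m) ℂ)) = z ⊗ₜ[ℝ] X
    rw [hre, him, tmul_smul, tmul_smul, smul_tmul', smul_tmul', ← add_tmul]
    congr 1
    simp [Complex.real_smul, Complex.re_add_im]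

def hermEquiv (m : ℕ) : ℂ ⊗[ℝ] (HermMat m) ≃ₗ[ℂ] Matrix (Fin m) (Fin m) ℂ :=
  LinearEquiv.ofBijective (hermToMat m)
    ⟨Function.LeftInverse.injective (g := matToHerm m) (matToHerm_hermToMat m),
     Function.RightInverse.surjective (g := matToHerm m) (hermToMat_matToHerm m)⟩

lemma hermEquiv_conj (m : ℕ) (A : Matrix (Fin m) (Fin m) ℂ) (t : ℂ ⊗[ℝ] (HermMat m)) :
    hermToMat m (LinearMap.baseChange ℂ (hermCongr A) t) = A * hermToMat m t * Aᴴ := by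
  induction t with
  | zero => simp
  | add x y hx hy => rw [map_add, map_add, hx, hy, map_add, Matrix.mul_add, Matrix.add_mul]
  | tmul z X =>
    rw [LinearMap.baseChange_tmul]
    rw [hermToMat_tmul, hermToMat_tmul]
    show z • (A * (X : Matrix (Fin m) (Fin m) ℂ) * Aᴴ) = A * z • (X : Matrix (Fin m) (Fin m) ℂ) * Aᴴ
    rw [Matrix.mul_smul, Matrix.smul_mul]


end DetHermCongrAux

/-- complex case β = 2 of Proposition 1(i): for invertible complex `A`, the
determinant of the ℝ-linear endomorphism `X ↦ A X A*` of the Hermitian matrices is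
`|det A| ^ (2m)`. -/
theorem det_hermCongr (m : ℕ) (hm : 1 ≤ m) (A : Matrix (Fin m) (Fin m) ℂ)
    (hA : IsUnit A.det) :
    LinearMap.det (hermCongr A) = ‖A.det‖ ^ (2 * m) := by
  have hbc := LinearMap.det_baseChange (A := ℂ) (hermCongr A)
  have hconj : ((hermEquiv m : ℂ ⊗[ℝ] (HermMat m) →ₗ[ℂ] Matrix (Fin m) (Fin m) ℂ) ∘ₗ
        LinearMap.baseChange ℂ (hermCongr A) ∘ₗ
        ((hermEquiv m).symm : Matrix (Fin m) (Fin m) ℂ →ₗ[ℂ] ℂ ⊗[ℝ] (HermMat m)))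
      = (LinearMap.mulRight ℂ Aᴴ).comp (LinearMap.mulLeft ℂ A) := by
    refine LinearMap.ext fun X => ?_
    show hermToMat m (LinearMap.baseChange ℂ (hermCongr A) ((hermEquiv m).symm X)) = A * X * Aᴴ
    rw [hermEquiv_conj]
    congr 1
    show A * hermToMat m ((hermEquiv m).symm X) = A * X
    congr 1
    exact (hermEquiv m).apply_symm_apply X
  have hdet := LinearMap.det_conj (A := ℂ) (M := ℂ ⊗[ℝ] HermMat m) (N := Matrix (Fin m) (Fin m) ℂ) (LinearMap.baseChange ℂ (hermCongr A)) (hermEquiv m)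
  rw [hconj, LinearMap.det_comp, det_mulRight', det_mulLeft'] at hdet
  have key : algebraMap ℝ ℂ (LinearMap.det (hermCongr A))
      = algebraMap ℝ ℂ (‖A.det‖ ^ (2 * m)) := by
    rw [← hbc, ← hdet, mul_comm, Matrix.det_conjTranspose]
    rw [← mul_pow]
    have : A.det * star A.det = ((‖A.det‖ ^ 2 : ℝ) : ℂ) := by
      rw [Complex.sq_norm]
      simp [Complex.star_def, Complex.mul_conj]
    rw [this, ← Complex.ofReal_pow, ← pow_mul]
    norm_num [Complex.coe_algebraMap]
  exact (algebraMap ℝ ℂ).injective key
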